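/- Let e and f be real numbers with f ≥ e ≥ 0, and let (c_{n,k}(q))_{n,k ≥ 0} be defined by c_{0,0}(q) = 1, c_{n,k}(q) = 0 unless n ≥ k ≥ 0, and for n ≥ 1 by c_{n,0}(q) = ((f − e) + e q)·c_{n−1,0}(q) + f q·c_{n−1,1}(q) and, for k ≥ 1, c_{n,k}(q) = c_{n−1,k−1}(q) + (1 + q)·c_{n−1,k}(q) + q·c_{n−1,k+1}(q). Then the first column (c_{n,0}(q))_{n ≥ 0} is q-log-convex: for every n ≥ 1, the polynomial c_{n+1,0}(q)·c_{n−1,0}(q) − c_{n,0}(q)^2 has all coefficients nonnegative. -/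

import Mathlib

open Polynomial

private def QNN (P : Polynomial ℝ) : Prop := ∀ m, 0 ≤ P.coeff m

private lemma QNN.add' {P Q : Polynomial ℝ} (h1 : QNN P) (h2 : QNN Q) : QNN (P + Q) :=
  fun m => by rw [coeff_add]; exact add_nonneg (h1 m) (h2 m)

private lemma QNN.mul' {P Q : Polynomial ℝ} (h1 : QNN P) (h2 : QNN Q) : QNN (P * Q) :=
  fun m => by
    rw [coeff_mul]
    exact Finset.sum_nonneg fun x _ => mul_nonneg (h1 _) (h2 _)

private lemma qnn_C {a : ℝ} (h : 0 ≤ a) : QNN (C a) := fun m => by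
  rw [coeff_C]; split_ifs <;> simp [h]

private lemma qnn_X : QNN (X : Polynomial ℝ) := fun m => by
  rw [coeff_X]; split_ifs <;> norm_num

private lemma qnn_one : QNN (1 : Polynomial ℝ) := fun m => by
  rw [coeff_one]; split_ifs <;> norm_num

/-- Key lemma: all `2×2` minors of consecutive rows of the triangle are
coefficientwise nonnegative (`q`-total positivity of order 2, consecutive rows). -/
private lemma key_minors (e f : ℝ) (he : 0 ≤ e) (hef : e ≤ f)
    (c : ℕ → ℕ → Polynomial ℝ)
    (h00 : c 0 0 = 1)
    (hz : ∀ n k : ℕ, n < k → c n k = 0)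
    (hrec0 : ∀ n : ℕ, c (n + 1) 0 =
      (Polynomial.C (f - e) + Polynomial.C e * Polynomial.X) * c n 0
        + Polynomial.C f * Polynomial.X * c n 1)
    (hrec : ∀ n k : ℕ, c (n + 1) (k + 1) =
      c n k + (1 + Polynomial.X) * c n (k + 1) + Polynomial.X * c n (k + 2)) :
    ∀ n j k : ℕ, j < k → QNN (c n j * c (n + 1) k - c n k * c (n + 1) j) := by
  have qX : QNN (X : Polynomial ℝ) := qnn_X
  have q1X : QNN (1 + X : Polynomial ℝ) := qnn_one.add' qX
  have qXX : QNN (X * X : Polynomial ℝ) := qX.mul' qX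
  have qfe : QNN (C (f - e)) := qnn_C (by linarith)
  have qe : QNN (C e) := qnn_C he
  have qf : QNN (C f) := qnn_C (he.trans hef)
  have qB0 : QNN (C (f - e) + C e * X) := qfe.add' (qe.mul' qX)
  have qF : QNN (C f * X) := qf.mul' qX
  intro n
  induction n with
  | zero =>
    intro j k hjk
    rcases Nat.eq_zero_or_pos j with rfl | hj
    · have hk0 : c 0 k = 0 := hz 0 k hjk
      by_cases hk1 : k = 1
      · subst hk1
        have h1 : c 1 1 = c 0 0 + (1 + X) * c 0 1 + X * c 0 2 := hrec 0 0
        rw [hk0, h1, h00, hz 0 1 (by omega), hz 0 2 (by omega)]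
        intro m
        simp only [mul_zero, zero_mul, sub_zero, add_zero, mul_one, one_mul, coeff_one]
        split_ifs <;> norm_num
      · obtain ⟨d, rfl⟩ : ∃ d, k = d + 2 := ⟨k - 2, by omega⟩
        have h1 : c 1 (d + 2) = c 0 (d + 1) + (1 + X) * c 0 (d + 2) + X * c 0 (d + 3) :=
          hrec 0 (d + 1)
        rw [hk0, h1, hz 0 (d + 1) (by omega), hz 0 (d + 2) (by omega), hz 0 (d + 3) (by omega)]
        intro m; simp
    · rw [hz 0 j hj, hz 0 k (by omega)]
      intro m; simp
  | succ n IH =>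
    intro j k hjk
    rcases Nat.eq_zero_or_pos j with rfl | hj
    · -- j = 0
      by_cases hk1 : k = 1
      · subst hk1
        have hC : (C f : Polynomial ℝ) = C (f - e) + C e := by
          rw [← C_add, sub_add_cancel]
        have e1 : c (n + 2) 1 = c (n + 1) 0 + (1 + X) * c (n + 1) 1 + X * c (n + 1) 2 :=
          hrec (n + 1) 0
        have e2 : c (n + 2) 0 =
            (C (f - e) + C e * X) * c (n + 1) 0 + C f * X * c (n + 1) 1 := hrec0 (n + 1)
        have e3 : c (n + 1) 0 = (C (f - e) + C e * X) * c n 0 + C f * X * c n 1 := hrec0 n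
        have e4 : c (n + 1) 1 = c n 0 + (1 + X) * c n 1 + X * c n 2 := hrec n 0
        have e5 : c (n + 1) 2 = c n 1 + (1 + X) * c n 2 + X * c n 3 := hrec n 1
        have hid : c (n + 1) 0 * c (n + 2) 1 - c (n + 1) 1 * c (n + 2) 0 =
            (C (f - e) + C e * (X * X)) * (c n 0 * c (n + 1) 1 - c n 1 * c (n + 1) 0)
            + ((C (f - e) + C e * X) * X) * (c n 0 * c (n + 1) 2 - c n 2 * c (n + 1) 0)
            + (C f * (X * X)) * (c n 1 * c (n + 1) 2 - c n 2 * c (n + 1) 1) := by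
          rw [e1, e2, e3, e4, e5, hC]; ring
        rw [hid]
        repeat' first
          | with_reducible exact IH _ _ (by omega)
          | apply QNN.add'
          | apply QNN.mul'
          | exact qX
          | exact q1X
          | exact qnn_one
          | exact qfe
          | exact qe
          | exact qf
      · by_cases hk2 : k = 2
        · subst hk2
          have e1 : c (n + 2) 2 = c (n + 1) 1 + (1 + X) * c (n + 1) 2 + X * c (n + 1) 3 :=
            hrec (n + 1) 1
          have e2 : c (n + 2) 0 =
              (C (f - e) + C e * X) * c (n + 1) 0 + C f * X * c (n + 1) 1 := hrec0 (n + 1)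
          have e3 : c (n + 1) 0 = (C (f - e) + C e * X) * c n 0 + C f * X * c n 1 := hrec0 n
          have e4 : c (n + 1) 2 = c n 1 + (1 + X) * c n 2 + X * c n 3 := hrec n 1
          have hid : c (n + 1) 0 * c (n + 2) 2 - c (n + 1) 2 * c (n + 2) 0 =
              (C (f - e) + C e * X) *
                ((c n 0 * c (n + 1) 1 - c n 1 * c (n + 1) 0)
                + (1 + X) * (c n 0 * c (n + 1) 2 - c n 2 * c (n + 1) 0)
                + X * (c n 0 * c (n + 1) 3 - c n 3 * c (n + 1) 0))
              + (C f * X) *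
                ((1 + X) * (c n 1 * c (n + 1) 2 - c n 2 * c (n + 1) 1)
                + X * (c n 1 * c (n + 1) 3 - c n 3 * c (n + 1) 1)) := by
            rw [e1, e2, e3, e4]; ring
          rw [hid]
          repeat' first
            | with_reducible exact IH _ _ (by omega)
            | apply QNN.add'
            | apply QNN.mul'
            | exact qX
            | exact q1X
            | exact qnn_one
            | exact qfe
            | exact qe
            | exact qf
        · -- k = d + 3
          obtain ⟨d, rfl⟩ : ∃ d, k = d + 3 := ⟨k - 3, by omega⟩
          have e1 : c (n + 2) (d + 3) =
              c (n + 1) (d + 2) + (1 + X) * c (n + 1) (d + 3) + X * c (n + 1) (d + 4) :=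
            hrec (n + 1) (d + 2)
          have e2 : c (n + 2) 0 =
              (C (f - e) + C e * X) * c (n + 1) 0 + C f * X * c (n + 1) 1 := hrec0 (n + 1)
          have e3 : c (n + 1) 0 = (C (f - e) + C e * X) * c n 0 + C f * X * c n 1 := hrec0 n
          have e4 : c (n + 1) (d + 3) =
              c n (d + 2) + (1 + X) * c n (d + 3) + X * c n (d + 4) := hrec n (d + 2)
          have hid : c (n + 1) 0 * c (n + 2) (d + 3) - c (n + 1) (d + 3) * c (n + 2) 0 =
              (C (f - e) + C e * X) *
                ((c n 0 * c (n + 1) (d + 2) - c n (d + 2) * c (n + 1) 0)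
                + (1 + X) * (c n 0 * c (n + 1) (d + 3) - c n (d + 3) * c (n + 1) 0)
                + X * (c n 0 * c (n + 1) (d + 4) - c n (d + 4) * c (n + 1) 0))
              + (C f * X) *
                ((c n 1 * c (n + 1) (d + 2) - c n (d + 2) * c (n + 1) 1)
                + (1 + X) * (c n 1 * c (n + 1) (d + 3) - c n (d + 3) * c (n + 1) 1)
                + X * (c n 1 * c (n + 1) (d + 4) - c n (d + 4) * c (n + 1) 1)) := by
            rw [e1, e2, e3, e4]; ring
          rw [hid]
          repeat' first
            | with_reducible exact IH _ _ (by omega)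
            | apply QNN.add'
            | apply QNN.mul'
            | exact qX
            | exact q1X
            | exact qnn_one
            | exact qfe
            | exact qe
            | exact qf
    · -- j = i + 1
      obtain ⟨i, rfl⟩ : ∃ i, j = i + 1 := ⟨j - 1, by omega⟩
      by_cases hk1 : k = i + 2
      · subst hk1
        have e1 : c (n + 2) (i + 2) =
            c (n + 1) (i + 1) + (1 + X) * c (n + 1) (i + 2) + X * c (n + 1) (i + 3) :=
          hrec (n + 1) (i + 1)
        have e2 : c (n + 2) (i + 1) =
            c (n + 1) i + (1 + X) * c (n + 1) (i + 1) + X * c (n + 1) (i + 2) :=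
          hrec (n + 1) i
        have e3 : c (n + 1) (i + 1) = c n i + (1 + X) * c n (i + 1) + X * c n (i + 2) :=
          hrec n i
        have e4 : c (n + 1) (i + 2) =
            c n (i + 1) + (1 + X) * c n (i + 2) + X * c n (i + 3) := hrec n (i + 1)
        have hid : c (n + 1) (i + 1) * c (n + 2) (i + 2)
              - c (n + 1) (i + 2) * c (n + 2) (i + 1) =
            (c n i * c (n + 1) (i + 1) - c n (i + 1) * c (n + 1) i)
            + (1 + X) * (c n i * c (n + 1) (i + 2) - c n (i + 2) * c (n + 1) i)
            + X * (c n i * c (n + 1) (i + 3) - c n (i + 3) * c (n + 1) i)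
            + (1 + X + X * X) *
                (c n (i + 1) * c (n + 1) (i + 2) - c n (i + 2) * c (n + 1) (i + 1))
            + (X + X * X) *
                (c n (i + 1) * c (n + 1) (i + 3) - c n (i + 3) * c (n + 1) (i + 1))
            + (X * X) *
                (c n (i + 2) * c (n + 1) (i + 3) - c n (i + 3) * c (n + 1) (i + 2)) := by
          rw [e1, e2, e3, e4]; ring
        rw [hid]
        repeat' first
          | with_reducible exact IH _ _ (by omega)
          | apply QNN.add'
          | apply QNN.mul'
          | exact qX
          | exact q1X
          | exact qnn_one
          | exact qfe
          | exact qe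
          | exact qf
      · by_cases hk2 : k = i + 3
        · subst hk2
          have e1 : c (n + 2) (i + 3) =
              c (n + 1) (i + 2) + (1 + X) * c (n + 1) (i + 3) + X * c (n + 1) (i + 4) :=
            hrec (n + 1) (i + 2)
          have e2 : c (n + 2) (i + 1) =
              c (n + 1) i + (1 + X) * c (n + 1) (i + 1) + X * c (n + 1) (i + 2) :=
            hrec (n + 1) i
          have e3 : c (n + 1) (i + 1) = c n i + (1 + X) * c n (i + 1) + X * c n (i + 2) :=
            hrec n i
          have e4 : c (n + 1) (i + 3) =
              c n (i + 2) + (1 + X) * c n (i + 3) + X * c n (i + 4) := hrec n (i + 2)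
          have hid : c (n + 1) (i + 1) * c (n + 2) (i + 3)
                - c (n + 1) (i + 3) * c (n + 2) (i + 1) =
              (c n i * c (n + 1) (i + 2) - c n (i + 2) * c (n + 1) i)
              + (1 + X) * (c n i * c (n + 1) (i + 3) - c n (i + 3) * c (n + 1) i)
              + X * (c n i * c (n + 1) (i + 4) - c n (i + 4) * c (n + 1) i)
              + (1 + X) *
                  (c n (i + 1) * c (n + 1) (i + 2) - c n (i + 2) * c (n + 1) (i + 1))
              + ((1 + X) * (1 + X)) *
                  (c n (i + 1) * c (n + 1) (i + 3) - c n (i + 3) * c (n + 1) (i + 1))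
              + ((1 + X) * X) *
                  (c n (i + 1) * c (n + 1) (i + 4) - c n (i + 4) * c (n + 1) (i + 1))
              + (X * (1 + X)) *
                  (c n (i + 2) * c (n + 1) (i + 3) - c n (i + 3) * c (n + 1) (i + 2))
              + (X * X) *
                  (c n (i + 2) * c (n + 1) (i + 4) - c n (i + 4) * c (n + 1) (i + 2)) := by
            rw [e1, e2, e3, e4]; ring
          rw [hid]
          repeat' first
            | with_reducible exact IH _ _ (by omega)
            | apply QNN.add'
            | apply QNN.mul'
            | exact qX
            | exact q1X
            | exact qnn_one
            | exact qfe
            | exact qe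
            | exact qf
        · -- k = i + d + 4
          obtain ⟨d, rfl⟩ : ∃ d, k = i + d + 4 := ⟨k - (i + 4), by omega⟩
          have e1 : c (n + 2) (i + d + 4) =
              c (n + 1) (i + d + 3) + (1 + X) * c (n + 1) (i + d + 4)
                + X * c (n + 1) (i + d + 5) := hrec (n + 1) (i + d + 3)
          have e2 : c (n + 2) (i + 1) =
              c (n + 1) i + (1 + X) * c (n + 1) (i + 1) + X * c (n + 1) (i + 2) :=
            hrec (n + 1) i
          have e3 : c (n + 1) (i + 1) = c n i + (1 + X) * c n (i + 1) + X * c n (i + 2) :=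
            hrec n i
          have e4 : c (n + 1) (i + d + 4) =
              c n (i + d + 3) + (1 + X) * c n (i + d + 4) + X * c n (i + d + 5) :=
            hrec n (i + d + 3)
          have hid : c (n + 1) (i + 1) * c (n + 2) (i + d + 4)
                - c (n + 1) (i + d + 4) * c (n + 2) (i + 1) =
              ((c n i * c (n + 1) (i + d + 3) - c n (i + d + 3) * c (n + 1) i)
                + (1 + X) * (c n i * c (n + 1) (i + d + 4) - c n (i + d + 4) * c (n + 1) i)
                + X * (c n i * c (n + 1) (i + d + 5) - c n (i + d + 5) * c (n + 1) i))
              + (1 + X) *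
                ((c n (i + 1) * c (n + 1) (i + d + 3) - c n (i + d + 3) * c (n + 1) (i + 1))
                + (1 + X) * (c n (i + 1) * c (n + 1) (i + d + 4)
                    - c n (i + d + 4) * c (n + 1) (i + 1))
                + X * (c n (i + 1) * c (n + 1) (i + d + 5)
                    - c n (i + d + 5) * c (n + 1) (i + 1)))
              + X *
                ((c n (i + 2) * c (n + 1) (i + d + 3) - c n (i + d + 3) * c (n + 1) (i + 2))
                + (1 + X) * (c n (i + 2) * c (n + 1) (i + d + 4)
                    - c n (i + d + 4) * c (n + 1) (i + 2))
                + X * (c n (i + 2) * c (n + 1) (i + d + 5)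
                    - c n (i + d + 5) * c (n + 1) (i + 2))) := by
            rw [e1, e2, e3, e4]; ring
          rw [hid]
          repeat' first
            | with_reducible exact IH _ _ (by omega)
            | apply QNN.add'
            | apply QNN.mul'
            | exact qX
            | exact q1X
            | exact qnn_one
            | exact qfe
            | exact qe
            | exact qf

/-- For real numbers `f ≥ e ≥ 0`, the first column of the Catalan–Stieltjes matrix
defined by `c_{n,0} = ((f-e) + e q) c_{n-1,0} + f q c_{n-1,1}` and
`c_{n,k} = c_{n-1,k-1} + (1+q) c_{n-1,k} + q c_{n-1,k+1}` (for `k ≥ 1`) is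
`q`-log-convex: for `n ≥ 1`, all coefficients of `c_{n+1,0} c_{n-1,0} - c_{n,0}²`
are nonnegative. -/
theorem first_column_q_log_convex_case1
    (e f : ℝ) (he : 0 ≤ e) (hef : e ≤ f)
    (c : ℕ → ℕ → Polynomial ℝ)
    (h00 : c 0 0 = 1)
    (hz : ∀ n k : ℕ, n < k → c n k = 0)
    (hrec0 : ∀ n : ℕ, c (n + 1) 0 =
      (Polynomial.C (f - e) + Polynomial.C e * Polynomial.X) * c n 0
        + Polynomial.C f * Polynomial.X * c n 1)
    (hrec : ∀ n k : ℕ, c (n + 1) (k + 1) =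
      c n k + (1 + Polynomial.X) * c n (k + 1) + Polynomial.X * c n (k + 2))
    (n : ℕ) (hn : 1 ≤ n) (m : ℕ) :
    0 ≤ (c (n + 1) 0 * c (n - 1) 0 - (c n 0) ^ 2).coeff m := by
  obtain ⟨p, rfl⟩ : ∃ p, n = p + 1 := ⟨n - 1, by omega⟩
  simp only [Nat.add_sub_cancel]
  have e1 : c (p + 1 + 1) 0 =
      (C (f - e) + C e * X) * c (p + 1) 0 + C f * X * c (p + 1) 1 := hrec0 (p + 1)
  have e2 : c (p + 1) 0 = (C (f - e) + C e * X) * c p 0 + C f * X * c p 1 := hrec0 p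
  have hid : c (p + 1 + 1) 0 * c p 0 - c (p + 1) 0 ^ 2 =
      (C f * X) * (c p 0 * c (p + 1) 1 - c p 1 * c (p + 1) 0) := by
    rw [e1, e2]; ring
  rw [hid]
  exact ((qnn_C (he.trans hef)).mul' qnn_X).mul'
    (key_minors e f he hef c h00 hz hrec0 hrec p 0 1 (by omega)) m
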